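/- Let F : ℝ≥0 → ℝ≥0 be differentiable with F ∈ L¹(ℝ≥0), and suppose t ↦ F(t) + (η/τ)e^{−τt} is non-increasing for some constants η, τ > 0. Then F(t) = o(t^{−1}) as t → ∞; in particular √F(t) = o(t^{−1/2}). -/

import Mathlib

open MeasureTheory Filter Asymptotics Topology

theorem perturbed_monotone_integrable_decay
    (F : ℝ → ℝ) (η τ : ℝ) (hη : 0 < η) (hτ : 0 < τ)
    (hdiff : ∀ t, 0 ≤ t → DifferentiableAt ℝ F t)
    (hF : ∀ t, 0 ≤ t → 0 ≤ F t)
    (hFint : IntegrableOn F (Set.Ici (0:ℝ)))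
    (hmono : AntitoneOn (fun t => F t + (η/τ) * Real.exp (-τ * t)) (Set.Ici 0)) :
    F =o[atTop] (fun t : ℝ => t⁻¹) ∧
      (fun t => Real.sqrt (F t)) =o[atTop] (fun t : ℝ => (Real.sqrt t)⁻¹) := by
  set c : ℝ := η / τ with hc
  have hcpos : 0 < c := div_pos hη hτ
  have hint0 : IntegrableOn F (Set.Ioi (0:ℝ)) :=
    hFint.mono_set Set.Ioi_subset_Ici_self
  -- tail integral tends to 0
  have hJ : Tendsto (fun a => ∫ s in Set.Ioi a, F s) atTop (𝓝 0) := by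
    have h1 : Tendsto (fun a : ℝ => ∫ s in (0:ℝ)..a, F s) atTop
        (𝓝 (∫ s in Set.Ioi (0:ℝ), F s)) :=
      intervalIntegral_tendsto_integral_Ioi 0 hint0 tendsto_id
    have h2 : Tendsto (fun a : ℝ => (∫ s in Set.Ioi (0:ℝ), F s) - ∫ s in (0:ℝ)..a, F s)
        atTop (𝓝 0) := by
      have := (tendsto_const_nhds (x := ∫ s in Set.Ioi (0:ℝ), F s) (f := atTop)).sub h1
      simpa using this
    refine h2.congr' ?_
    filter_upwards [eventually_ge_atTop (0:ℝ)] with a ha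
    have hsplit : Set.Ioc 0 a ∪ Set.Ioi a = Set.Ioi (0:ℝ) := Set.Ioc_union_Ioi_eq_Ioi ha
    have hdisj : Disjoint (Set.Ioc (0:ℝ) a) (Set.Ioi a) := by
      rw [Set.disjoint_left]
      intro x hx hx'
      exact absurd hx.2 (not_le.2 hx')
    have hiA : IntegrableOn F (Set.Ioc (0:ℝ) a) :=
      hint0.mono_set Set.Ioc_subset_Ioi_self
    have hiB : IntegrableOn F (Set.Ioi a) :=
      hFint.mono_set fun x hx => le_trans ha (le_of_lt hx)
    have hsum := setIntegral_union hdisj measurableSet_Ioi hiA hiB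
    rw [hsplit] at hsum
    rw [intervalIntegral.integral_of_le ha, hsum]
    ring
  -- key inequality
  have key : ∀ t : ℝ, 0 < t →
      t * F t ≤ 2 * (∫ s in Set.Ioc (t/2) t, F s) + t * (c * Real.exp (-τ * (t/2))) := by
    intro t ht
    have ht2 : 0 ≤ t / 2 := by linarith
    have hlow : ∀ s ∈ Set.Ioc (t/2) t, F t - c * Real.exp (-τ * (t/2)) ≤ F s := by
      intro s hs
      have hs0 : (0:ℝ) ≤ s := le_of_lt (lt_of_le_of_lt ht2 hs.1)
      have hm := hmono (Set.mem_Ici.2 hs0) (Set.mem_Ici.2 (le_of_lt ht)) hs.2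
      have hexp : Real.exp (-τ * s) ≤ Real.exp (-τ * (t/2)) := by
        apply Real.exp_le_exp.mpr
        nlinarith [hs.1]
      have hexp2 : 0 < Real.exp (-τ * t) := Real.exp_pos _
      have hm' : F t + c * Real.exp (-τ * t) ≤ F s + c * Real.exp (-τ * s) := hm
      nlinarith [mul_le_mul_of_nonneg_left hexp (le_of_lt hcpos)]
    have hiI : IntegrableOn F (Set.Ioc (t/2) t) :=
      hFint.mono_set fun x hx => le_trans ht2 (le_of_lt hx.1)
    have hconst : IntegrableOn (fun _ : ℝ => F t - c * Real.exp (-τ * (t/2)))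
        (Set.Ioc (t/2) t) := by
      refine integrableOn_const (hs := ?_)
      rw [Real.volume_Ioc]
      exact ENNReal.ofReal_ne_top
    have hmonoInt := setIntegral_mono_on hconst hiI measurableSet_Ioc hlow
    rw [setIntegral_const,
      Real.volume_real_Ioc_of_le (by linarith : t/2 ≤ t)] at hmonoInt
    have h2 : (t - t/2) = t/2 := by ring
    rw [h2] at hmonoInt
    have hInonneg : 0 ≤ ∫ s in Set.Ioc (t/2) t, F s := by
      refine setIntegral_nonneg measurableSet_Ioc fun x hx => hF x ?_
      exact le_trans ht2 (le_of_lt hx.1)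
    rw [smul_eq_mul] at hmonoInt
    nlinarith [hmonoInt]
  -- t * exp(-τ * (t/2)) → 0
  have hexp0 : Tendsto (fun t : ℝ => t * (c * Real.exp (-τ * (t/2)))) atTop (𝓝 0) := by
    have h1 : Tendsto (fun x : ℝ => x * Real.exp (-x)) atTop (𝓝 0) := by
      simpa using Real.tendsto_pow_mul_exp_neg_atTop_nhds_zero 1
    have h2 : Tendsto (fun t : ℝ => τ * t / 2) atTop atTop := by
      apply Tendsto.atTop_div_const (by norm_num)
      exact tendsto_id.const_mul_atTop hτ
    have h3 := h1.comp h2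
    have h4 : Tendsto (fun t : ℝ => (2 * c / τ) * ((τ * t / 2) * Real.exp (-(τ * t / 2))))
        atTop (𝓝 0) := by
      simpa using h3.const_mul (2 * c / τ)
    refine h4.congr' ?_
    filter_upwards [eventually_gt_atTop (0:ℝ)] with t ht
    have hτ' : τ ≠ 0 := ne_of_gt hτ
    field_simp
  -- the squeeze: t * F t → 0
  have hI0 : Tendsto (fun t : ℝ => ∫ s in Set.Ioc (t/2) t, F s) atTop (𝓝 0) := by
    have hhalf : Tendsto (fun t : ℝ => t / 2) atTop atTop :=
      tendsto_id.atTop_div_const (by norm_num)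
    refine squeeze_zero_norm' ?_ (hJ.comp hhalf)
    filter_upwards [eventually_gt_atTop (0:ℝ)] with t ht
    have ht2 : 0 ≤ t / 2 := by linarith
    have hInonneg : 0 ≤ ∫ s in Set.Ioc (t/2) t, F s := by
      refine setIntegral_nonneg measurableSet_Ioc fun x hx => hF x ?_
      exact le_trans ht2 (le_of_lt hx.1)
    rw [Real.norm_of_nonneg hInonneg]
    refine setIntegral_mono_set
      (hFint.mono_set fun x hx => le_trans ht2 (le_of_lt hx)) ?_ ?_
    · refine (ae_restrict_iff' measurableSet_Ioi).2 ?_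
      exact Filter.Eventually.of_forall fun x hx => hF x (le_trans ht2 (le_of_lt hx))
    · exact Set.Ioc_subset_Ioi_self.eventuallyLE
  have hmain : Tendsto (fun t : ℝ => t * F t) atTop (𝓝 0) := by
    have hub : Tendsto (fun t : ℝ => 2 * (∫ s in Set.Ioc (t/2) t, F s)
        + t * (c * Real.exp (-τ * (t/2)))) atTop (𝓝 0) := by
      have := (hI0.const_mul 2).add hexp0
      simpa using this
    refine tendsto_of_tendsto_of_tendsto_of_le_of_le' tendsto_const_nhds hub ?_ ?_
    · filter_upwards [eventually_gt_atTop (0:ℝ)] with t ht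
      exact mul_nonneg (le_of_lt ht) (hF t (le_of_lt ht))
    · filter_upwards [eventually_gt_atTop (0:ℝ)] with t ht
      exact key t ht
  constructor
  · rw [isLittleO_iff_tendsto']
    · refine hmain.congr' ?_
      filter_upwards [eventually_gt_atTop (0:ℝ)] with t ht
      rw [div_inv_eq_mul]; ring
    · filter_upwards [eventually_gt_atTop (0:ℝ)] with t ht h
      exact absurd h (inv_ne_zero (ne_of_gt ht))
  · rw [isLittleO_iff_tendsto']
    · have hsq : Tendsto (fun t : ℝ => Real.sqrt (t * F t)) atTop (𝓝 0) := by
        have := (Real.continuous_sqrt.tendsto 0).comp hmain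
        simpa [Function.comp_def] using this
      refine hsq.congr' ?_
      filter_upwards [eventually_gt_atTop (0:ℝ)] with t ht
      rw [Real.sqrt_mul (le_of_lt ht), div_inv_eq_mul]
      ring
    · filter_upwards [eventually_gt_atTop (0:ℝ)] with t ht h
      exact absurd h (inv_ne_zero (ne_of_gt (Real.sqrt_pos.2 ht)))
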